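/- Under the leakage condition Σ_j P_j ≥ α I on H₀ (α > 0), for every x with ⟨x,R₀x⟩ > 0 one has ⟨x, R_∞(ω) x⟩ = 0 for ν_x-almost every ω; i.e., the residual x-energy vanishes along almost every branch. -/

import Mathlib

open MeasureTheory ContinuousLinearMap Filter Topology
open scoped InnerProductSpace ENNReal

variable {H : Type*} [NormedAddCommGroup H] [InnerProductSpace ℂ H] [CompleteSpace H]

/-- The positive square root of a (positive) bounded operator, via the
continuous functional calculus. -/
noncomputable def sqrtOp (T : H →L[ℂ] H) : H →L[ℂ] H := CFC.sqrt T

/-- The weighted residual map `Φ_P(R) = R^{1/2} (I - P) R^{1/2}`. -/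
noncomputable def wrStep (P R : H →L[ℂ] H) : H →L[ℂ] H :=
  sqrtOp R * (1 - P) * sqrtOp R

/-- The dissipated piece `D = R^{1/2} P R^{1/2}`. -/
noncomputable def wrDiss (P R : H →L[ℂ] H) : H →L[ℂ] H :=
  sqrtOp R * P * sqrtOp R

/-- WR tree residuals, indexed by finite words over `Fin m` written in
*reversed* order (the head of the list is the last letter of the word). -/
noncomputable def wrRes {m : ℕ} (R0 : H →L[ℂ] H) (P : Fin m → H →L[ℂ] H) :
    List (Fin m) → H →L[ℂ] H
  | [] => R0
  | j :: w => wrStep (P j) (wrRes R0 P w)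

/-- WR residuals along an infinite branch `ω`. -/
noncomputable def wrResB {m : ℕ} (R0 : H →L[ℂ] H) (P : Fin m → H →L[ℂ] H)
    (ω : ℕ → Fin m) : ℕ → H →L[ℂ] H
  | 0 => R0
  | n + 1 => wrStep (P (ω n)) (wrResB R0 P ω n)

/-- The cylinder set of all infinite words extending the finite word `w`. -/
def cylinder {m : ℕ} (w : List (Fin m)) : Set (ℕ → Fin m) :=
  {ω | ∀ i, (h : i < w.length) → ω i = w.get ⟨i, h⟩}

/-- The filtration whose `n`-th σ-algebra is generated by the length-`n`
cylinders, i.e. by the first `n` coordinates. -/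
def prefixFiltration (m : ℕ) :
    Filtration ℕ (inferInstance : MeasurableSpace (ℕ → Fin m)) where
  seq n := ⨆ i ∈ Finset.range n, MeasurableSpace.comap (fun ω => ω i) inferInstance
  mono' _ _ hab := biSup_mono fun _ hi =>
    Finset.mem_range.mpr (lt_of_lt_of_le (Finset.mem_range.mp hi) hab)
  le' _ := iSup₂_le fun i _ => measurable_iff_comap_le.mp (measurable_pi_apply i)

/-- Cylinder weight `p(j₁|∅)p(j₂|j₁)⋯p(jₙ|j₁⋯j_{n-1})`; the accumulator `pre`
is the reversed prefix read so far. -/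
noncomputable def wrCylWeight {m : ℕ} (p : List (Fin m) → Fin m → ℝ) :
    List (Fin m) → List (Fin m) → ℝ
  | _, [] => 1
  | pre, j :: rest => p pre j * wrCylWeight p (j :: pre) rest

/-- Energy-biased transition probabilities `p_x(j | w)` (the word `w` is given
in reversed order): proportional to the dissipated `x`-energy
`⟨x, D_{wj} x⟩` when some energy is dissipated, and given by the reference
probability vector `q` at `x`-dead nodes. -/
noncomputable def pX {m : ℕ} (R0 : H →L[ℂ] H) (P : Fin m → H →L[ℂ] H) (x : H)
    (q : Fin m → ℝ) (w : List (Fin m)) (j : Fin m) : ℝ :=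
  if 0 < ∑ k, (⟪x, wrDiss (P k) (wrRes R0 P w) x⟫_ℂ).re then
    (⟪x, wrDiss (P j) (wrRes R0 P w) x⟫_ℂ).re /
      ∑ k, (⟪x, wrDiss (P k) (wrRes R0 P w) x⟫_ℂ).re
  else q j

set_option maxHeartbeats 1000000
set_option synthInstance.maxHeartbeats 400000

lemma sqrtOp_isPositive (T : H →L[ℂ] H) : (sqrtOp T).IsPositive :=
  (ContinuousLinearMap.nonneg_iff_isPositive _).mp (CFC.sqrt_nonneg _)

lemma sqrtOp_isSelfAdjoint (T : H →L[ℂ] H) : IsSelfAdjoint (sqrtOp T) :=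
  (sqrtOp_isPositive T).isSelfAdjoint

lemma sqrtOp_mul_self {T : H →L[ℂ] H} (h : T.IsPositive) : sqrtOp T * sqrtOp T = T :=
  CFC.sqrt_mul_sqrt_self T ((ContinuousLinearMap.nonneg_iff_isPositive T).mpr h)

lemma conj_isPositive {S T : H →L[ℂ] H} (hS : IsSelfAdjoint S) (hT : T.IsPositive) :
    (S * T * S).IsPositive := by
  have h := hT.conj_adjoint S
  rw [hS.adjoint_eq] at h
  exact h

lemma proj_isPositive {P : H →L[ℂ] H} (h1 : IsSelfAdjoint P) (h2 : P * P = P) :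
    P.IsPositive := by
  refine ⟨h1.isSymmetric, fun y => ?_⟩
  have key : ⟪P y, y⟫_ℂ = ⟪P y, P y⟫_ℂ := by
    calc ⟪P y, y⟫_ℂ = ⟪ContinuousLinearMap.adjoint P (P y), y⟫_ℂ := by
          rw [h1.adjoint_eq, ← ContinuousLinearMap.mul_apply, h2]
      _ = ⟪P y, P y⟫_ℂ := ContinuousLinearMap.adjoint_inner_left _ _ _
  show 0 ≤ (⟪P y, y⟫_ℂ).re
  rw [key]
  simpa using inner_self_nonneg (𝕜 := ℂ) (x := P y)

lemma one_sub_proj_isPositive {P : H →L[ℂ] H} (h1 : IsSelfAdjoint P) (h2 : P * P = P) :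
    (1 - P).IsPositive := by
  refine proj_isPositive ?_ ?_
  · exact (IsSelfAdjoint.one _).sub h1
  · have e : (1 - P) * (1 - P) = 1 - P - P + P * P := by noncomm_ring
    rw [e, h2]; abel

lemma wrStep_isPositive {P R : H →L[ℂ] H} (h1 : IsSelfAdjoint P) (h2 : P * P = P)
    (_hR : R.IsPositive) : (wrStep P R).IsPositive :=
  conj_isPositive (sqrtOp_isSelfAdjoint R) (one_sub_proj_isPositive h1 h2)

lemma wrDiss_isPositive {P R : H →L[ℂ] H} (h1 : IsSelfAdjoint P) (h2 : P * P = P)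
    (_hR : R.IsPositive) : (wrDiss P R).IsPositive :=
  conj_isPositive (sqrtOp_isSelfAdjoint R) (proj_isPositive h1 h2)

lemma wrDiss_add_wrStep {P R : H →L[ℂ] H} (hR : R.IsPositive) :
    wrDiss P R + wrStep P R = R := by
  have : wrDiss P R + wrStep P R = sqrtOp R * sqrtOp R := by
    unfold wrDiss wrStep; noncomm_ring
  rw [this, sqrtOp_mul_self hR]

lemma wrRes_isPositive {m : ℕ} {R0 : H →L[ℂ] H} (hR0 : R0.IsPositive)
    (P : Fin m → H →L[ℂ] H) (hP : ∀ j, IsSelfAdjoint (P j) ∧ P j * P j = P j) :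
    ∀ w : List (Fin m), (wrRes R0 P w).IsPositive
  | [] => hR0
  | j :: w => wrStep_isPositive (hP j).1 (hP j).2 (wrRes_isPositive hR0 P hP w)

lemma wrResB_isPositive {m : ℕ} {R0 : H →L[ℂ] H} (hR0 : R0.IsPositive)
    (P : Fin m → H →L[ℂ] H) (hP : ∀ j, IsSelfAdjoint (P j) ∧ P j * P j = P j)
    (ω : ℕ → Fin m) : ∀ n, (wrResB R0 P ω n).IsPositive
  | 0 => hR0
  | n + 1 => wrStep_isPositive (hP (ω n)).1 (hP (ω n)).2 (wrResB_isPositive hR0 P hP ω n)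

lemma wrResB_eq_wrRes {m : ℕ} (R0 : H →L[ℂ] H) (P : Fin m → H →L[ℂ] H)
    (ω : ℕ → Fin m) : ∀ n, wrResB R0 P ω n
      = wrRes R0 P ((List.ofFn fun i : Fin n => ω i).reverse)
  | 0 => by simp [wrResB, wrRes]
  | n + 1 => by
      rw [List.ofFn_succ']
      show wrStep (P (ω n)) (wrResB R0 P ω n) = _
      rw [wrResB_eq_wrRes R0 P ω n]
      simp [List.concat_eq_append, wrRes]

/-- If `ωᵢ = wᵢ` for all `i < n`, the `n`-th residual agrees. -/
lemma wrResB_congr {m : ℕ} (R0 : H →L[ℂ] H) (P : Fin m → H →L[ℂ] H)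
    {ω ω' : ℕ → Fin m} : ∀ n, (∀ i < n, ω i = ω' i) →
      wrResB R0 P ω n = wrResB R0 P ω' n
  | 0, _ => rfl
  | n + 1, h => by
      show wrStep (P (ω n)) _ = wrStep (P (ω' n)) _
      rw [h n (Nat.lt_succ_self n), wrResB_congr R0 P n fun i hi => h i (hi.trans (Nat.lt_succ_self n))]

/-- For a positive operator `T` mapping into a closed subspace `K`,
the square root also maps into `K`. -/
lemma sqrtOp_mem_of_mem {K : Submodule ℂ H} (hK : Kᗮᗮ = K)
    {T : H →L[ℂ] H} (hT : T.IsPositive) (h : ∀ z, T z ∈ K) :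
    ∀ z, sqrtOp T z ∈ K := by
  have hsa := sqrtOp_isSelfAdjoint T
  have hzero : ∀ y ∈ Kᗮ, sqrtOp T y = 0 := by
    intro y hy
    have h1 : ⟪sqrtOp T y, sqrtOp T y⟫_ℂ = ⟪y, T y⟫_ℂ := by
      calc ⟪sqrtOp T y, sqrtOp T y⟫_ℂ
          = ⟪ContinuousLinearMap.adjoint (sqrtOp T) y, sqrtOp T y⟫_ℂ := by rw [hsa.adjoint_eq]
        _ = ⟪y, sqrtOp T (sqrtOp T y)⟫_ℂ := ContinuousLinearMap.adjoint_inner_left _ _ _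
        _ = ⟪y, (sqrtOp T * sqrtOp T) y⟫_ℂ := rfl
        _ = ⟪y, T y⟫_ℂ := by rw [sqrtOp_mul_self hT]
    have h2 : ⟪y, T y⟫_ℂ = 0 := by
      have := (Submodule.mem_orthogonal K y).mp hy (T y) (h y)
      rwa [← inner_eq_zero_symm] at this
    exact inner_self_eq_zero.mp (h1.trans h2)
  intro z
  rw [← hK, Submodule.mem_orthogonal]
  intro u hu
  calc ⟪u, sqrtOp T z⟫_ℂ = ⟪ContinuousLinearMap.adjoint (sqrtOp T) u, z⟫_ℂ := by
        rw [ContinuousLinearMap.adjoint_inner_left]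
    _ = ⟪sqrtOp T u, z⟫_ℂ := by rw [hsa.adjoint_eq]
    _ = 0 := by rw [hzero u hu, inner_zero_left]

lemma wrRes_mem {m : ℕ} {R0 : H →L[ℂ] H} (hR0 : R0.IsPositive)
    (P : Fin m → H →L[ℂ] H) (hP : ∀ j, IsSelfAdjoint (P j) ∧ P j * P j = P j)
    {K : Submodule ℂ H} (hK : Kᗮᗮ = K)
    (hbase : ∀ z, sqrtOp R0 z ∈ K) :
    ∀ (w : List (Fin m)) (z : H), wrRes R0 P w z ∈ K ∧ sqrtOp (wrRes R0 P w) z ∈ K := by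
  intro w
  induction w with
  | nil =>
      intro z
      have h0 : ∀ z, R0 z ∈ K := by
        intro z
        have : R0 z = sqrtOp R0 (sqrtOp R0 z) := by
          rw [show sqrtOp R0 (sqrtOp R0 z) = (sqrtOp R0 * sqrtOp R0) z from rfl,
            sqrtOp_mul_self hR0]
        rw [this]; exact hbase _
      exact ⟨h0 z, sqrtOp_mem_of_mem hK hR0 h0 z⟩
  | cons j w ih =>
      have hpos := wrRes_isPositive hR0 P hP w
      have hpos' := wrRes_isPositive hR0 P hP (j :: w)
      have hmem : ∀ z, wrRes R0 P (j :: w) z ∈ K := by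
        intro z
        show wrStep (P j) (wrRes R0 P w) z ∈ K
        show (sqrtOp (wrRes R0 P w) * (1 - P j) * sqrtOp (wrRes R0 P w)) z ∈ K
        rw [ContinuousLinearMap.mul_apply, ContinuousLinearMap.mul_apply]
        exact sqrtOp_mem_of_mem hK hpos (fun y => (ih y).1) _
      exact fun z => ⟨hmem z, sqrtOp_mem_of_mem hK hpos' hmem z⟩

/-- Expected value of `g` after `n` more steps of the chain `p`, starting
from the (reversed) word `pre`. -/
noncomputable def wrA {m : ℕ} (p : List (Fin m) → Fin m → ℝ)
    (g : List (Fin m) → ℝ) : ℕ → List (Fin m) → ℝ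
  | 0, pre => g pre
  | n + 1, pre => ∑ j, p pre j * wrA p g n (j :: pre)

lemma wrA_nonneg {m : ℕ} {p : List (Fin m) → Fin m → ℝ} {g : List (Fin m) → ℝ}
    (hp : ∀ pre j, 0 ≤ p pre j) (hg : ∀ pre, 0 ≤ g pre) :
    ∀ n pre, 0 ≤ wrA p g n pre
  | 0, pre => hg pre
  | n + 1, pre => Finset.sum_nonneg fun j _ =>
      mul_nonneg (hp pre j) (wrA_nonneg hp hg n (j :: pre))

lemma wrA_succ_le {m : ℕ} {p : List (Fin m) → Fin m → ℝ} {g : List (Fin m) → ℝ}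
    {c : ℝ} (hp : ∀ pre j, 0 ≤ p pre j)
    (hkey : ∀ pre, ∑ j, p pre j * g (j :: pre) ≤ c * g pre) :
    ∀ n pre, wrA p g (n + 1) pre ≤ c * wrA p g n pre := by
  intro n
  induction n with
  | zero => exact fun pre => hkey pre
  | succ n ih =>
      intro pre
      show ∑ j, p pre j * wrA p g (n + 1) (j :: pre) ≤ c * ∑ j, p pre j * wrA p g n (j :: pre)
      rw [Finset.mul_sum]
      refine Finset.sum_le_sum fun j _ => ?_
      calc p pre j * wrA p g (n + 1) (j :: pre) ≤ p pre j * (c * wrA p g n (j :: pre)) :=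
            mul_le_mul_of_nonneg_left (ih _) (hp pre j)
        _ = c * (p pre j * wrA p g n (j :: pre)) := by ring

lemma wrA_le_pow {m : ℕ} {p : List (Fin m) → Fin m → ℝ} {g : List (Fin m) → ℝ}
    {c : ℝ} (hc : 0 ≤ c) (hp : ∀ pre j, 0 ≤ p pre j)
    (hkey : ∀ pre, ∑ j, p pre j * g (j :: pre) ≤ c * g pre) :
    ∀ n, wrA p g n [] ≤ c ^ n * g [] := by
  intro n
  induction n with
  | zero => simp [wrA]
  | succ n ih =>
      calc wrA p g (n + 1) [] ≤ c * wrA p g n [] := wrA_succ_le hp hkey n []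
        _ ≤ c * (c ^ n * g []) := mul_le_mul_of_nonneg_left ih hc
        _ = c ^ (n + 1) * g [] := by ring

lemma wrCylWeight_nonneg {m : ℕ} {p : List (Fin m) → Fin m → ℝ}
    (hp : ∀ pre j, 0 ≤ p pre j) :
    ∀ (w pre : List (Fin m)), 0 ≤ wrCylWeight p pre w
  | [], _ => by rw [wrCylWeight]; exact zero_le_one
  | j :: rest, pre => mul_nonneg (hp pre j) (wrCylWeight_nonneg hp rest (j :: pre))

/-- `wrA` as a sum over all words of length `n`. -/
lemma wrA_eq_sum {m : ℕ} (p : List (Fin m) → Fin m → ℝ) (g : List (Fin m) → ℝ) :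
    ∀ (n : ℕ) (pre : List (Fin m)), wrA p g n pre =
      ∑ v : Fin n → Fin m,
        wrCylWeight p pre (List.ofFn v) * g ((List.ofFn v).reverse ++ pre) := by
  intro n
  induction n with
  | zero =>
      intro pre
      rw [Fintype.sum_unique]
      simp [wrA, wrCylWeight]
  | succ n ih =>
      intro pre
      rw [← (Fin.consEquiv (fun _ : Fin (n + 1) => Fin m)).sum_comp, Fintype.sum_prod_type]
      show wrA p g (n+1) pre = _
      rw [show wrA p g (n+1) pre = ∑ j, p pre j * wrA p g n (j :: pre) from rfl]
      refine Finset.sum_congr rfl fun j _ => ?_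
      rw [ih (j :: pre), Finset.mul_sum]
      refine Finset.sum_congr rfl fun v _ => ?_
      have h1 : List.ofFn (Fin.consEquiv (fun _ : Fin (n+1) => Fin m) (j, v)) = j :: List.ofFn v := by
        show List.ofFn (Fin.cons j v) = _
        rw [List.ofFn_succ]
        simp
      rw [h1]
      show p pre j * (wrCylWeight p (j :: pre) (List.ofFn v) * g ((List.ofFn v).reverse ++ (j :: pre)))
        = wrCylWeight p pre (j :: List.ofFn v) * g ((j :: List.ofFn v).reverse ++ pre)
      rw [show wrCylWeight p pre (j :: List.ofFn v) = p pre j * wrCylWeight p (j :: pre) (List.ofFn v) from rfl]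
      rw [List.reverse_cons, List.append_assoc]
      ring_nf
      rfl

/-- The key one-step inequality for the energy-biased chain, on the level of
real numbers. -/
lemma key_ineq {m : ℕ} (hm : 0 < m) {α M : ℝ} (hα : 0 < α) (a b q : Fin m → ℝ)
    (hq0 : ∀ j, 0 ≤ q j)
    (ha : ∀ j, 0 ≤ a j) (hb : ∀ j, 0 ≤ b j) (hab : ∀ j, a j + b j = M)
    (hS : α * M ≤ ∑ k, a k) (hM : 0 ≤ M) :
    ∑ j, (if 0 < ∑ k, a k then a j / ∑ k, a k else q j) * b j
      ≤ max 0 (1 - α / m) * M := by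
  have hm' : (0:ℝ) < m := Nat.cast_pos.mpr hm
  set S := ∑ k, a k with hSdef
  have hfin : (1 - α / m) * M ≤ max 0 (1 - α / m) * M :=
    mul_le_mul_of_nonneg_right (le_max_right _ _) hM
  by_cases hpos : 0 < S
  · simp only [if_pos hpos]
    set T2 := ∑ j, a j ^ 2 with hT2
    have hcs : S ^ 2 ≤ m * T2 := by
      have := sq_sum_le_card_mul_sum_sq (s := (Finset.univ : Finset (Fin m))) (f := a)
      simpa [Finset.card_univ] using this
    have hsum : ∑ j, a j / S * b j = (S * M - T2) / S := by
      have h1 : ∀ j, a j / S * b j = a j * b j / S := fun j => by ring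
      rw [Finset.sum_congr rfl fun j _ => h1 j, ← Finset.sum_div]
      congr 1
      have h2 : ∀ j, a j * b j = a j * M - a j ^ 2 := fun j => by
        have h : b j = M - a j := by linarith [hab j]
        rw [h]; ring
      rw [Finset.sum_congr rfl fun j _ => h2 j, Finset.sum_sub_distrib, ← Finset.sum_mul]
    rw [hsum]
    refine le_trans ?_ hfin
    rw [div_le_iff₀ hpos]
    have h3 : α * M * S ≤ S ^ 2 := by nlinarith
    have h6 : α * M * S ≤ ↑m * T2 := h3.trans hcs
    have hdiv : α * M * S / ↑m ≤ T2 := (div_le_iff₀ hm').mpr (by linarith)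
    have heq : (1 - α / ↑m) * M * S = M * S - α * M * S / ↑m := by ring
    linarith
  · simp only [if_neg hpos]
    have hS0 : S = 0 := le_antisymm (not_lt.mp hpos) (Finset.sum_nonneg fun j _ => ha j)
    have hM0 : M = 0 := by nlinarith
    have hb0 : ∀ j, b j = 0 := by
      intro j
      have haj : a j = 0 :=
        (Finset.sum_eq_zero_iff_of_nonneg (fun j _ => ha j)).mp hS0 j (Finset.mem_univ j)
      have := hab j
      linarith
    rw [Finset.sum_congr rfl fun j _ => by rw [hb0 j, mul_zero]]
    simp [hM0]

lemma measurableSet_cylinder {m : ℕ} (w : List (Fin m)) :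
    MeasurableSet (_root_.cylinder w) := by
  have : _root_.cylinder w = ⋂ i : Fin w.length, (fun ω : ℕ → Fin m => ω i) ⁻¹' {w.get i} := by
    ext ω
    simp only [_root_.cylinder, Set.mem_setOf_eq, Set.mem_iInter, Set.mem_preimage,
      Set.mem_singleton_iff]
    constructor
    · exact fun h i => h i i.isLt
    · exact fun h i hi => h ⟨i, hi⟩
  rw [this]
  exact MeasurableSet.iInter fun i =>
    (measurable_pi_apply (i : ℕ)) (MeasurableSet.singleton _)

lemma mem_cylinder_ofFn {m n : ℕ} (v : Fin n → Fin m) (ω : ℕ → Fin m) :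
    ω ∈ _root_.cylinder (List.ofFn v) ↔ ∀ i : Fin n, ω i = v i := by
  simp only [_root_.cylinder, Set.mem_setOf_eq]
  constructor
  · intro h i
    have hi : (i : ℕ) < (List.ofFn v).length := by simp [i.isLt]
    have := h i hi
    rwa [List.get_ofFn] at this
  · intro h i hi
    have hi' : i < n := by simpa using hi
    rw [List.get_ofFn]
    exact h ⟨i, hi'⟩


/-- under the leakage condition `Σ_j P_j ≥ α I` on `H₀` with
`α > 0`, for every `x` with `⟨x,R₀x⟩ > 0` one has `⟨x, R_∞(ω) x⟩ = 0` for
`ν_x`-almost every branch `ω`. -/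
theorem wr_almost_sure_extinction (m : ℕ) (R0 : H →L[ℂ] H)
    (hR0 : R0.IsPositive) (P : Fin m → H →L[ℂ] H)
    (hP : ∀ j, IsSelfAdjoint (P j) ∧ P j * P j = P j)
    (α : ℝ) (hα : 0 < α)
    (hleak : ∀ y ∈ closure (Set.range ⇑(sqrtOp R0)),
      α * ‖y‖ ^ 2 ≤ (⟪y, (∑ j, P j) y⟫_ℂ).re)
    (x : H) (hx : 0 < (⟪x, R0 x⟫_ℂ).re)
    (q : Fin m → ℝ) (hq0 : ∀ j, 0 ≤ q j) (hq1 : ∑ j, q j = 1)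
    (ν : Measure (ℕ → Fin m)) [IsProbabilityMeasure ν]
    (hν : ∀ w : List (Fin m),
      ν (cylinder w) = ENNReal.ofReal (wrCylWeight (pX R0 P x q) [] w))
    (Rinf : (ℕ → Fin m) → H →L[ℂ] H)
    (hRinf : ∀ ω (y : H),
      Tendsto (fun n => wrResB R0 P ω n y) atTop (𝓝 (Rinf ω y))) :
    ∀ᵐ ω ∂ν, (⟪x, Rinf ω x⟫_ℂ).re = 0 := by
  classical
  set c : ℝ := max 0 (1 - α / m) with hc
  set p : List (Fin m) → Fin m → ℝ := pX R0 P x q with hpdef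
  set g : List (Fin m) → ℝ := fun w => (⟪x, wrRes R0 P w x⟫_ℂ).re with hgdef
  have hpos : ∀ w, (wrRes R0 P w).IsPositive := wrRes_isPositive hR0 P hP
  have hre : ∀ {T : H →L[ℂ] H}, T.IsPositive → ∀ z : H, 0 ≤ (⟪z, T z⟫_ℂ).re :=
    fun hT z => by simpa using (Complex.le_def.mp (hT.inner_nonneg_right z)).1
  have hg0 : ∀ w, 0 ≤ g w := fun w => hre (hpos w) x
  -- the closed subspace `K`
  set K : Submodule ℂ H := (LinearMap.range (sqrtOp R0 : H →ₗ[ℂ] H)).topologicalClosure with hKdef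
  have hK : Kᗮᗮ = K := by
    rw [hKdef, Submodule.orthogonal_orthogonal_eq_closure]
    exact (Submodule.isClosed_topologicalClosure _).submodule_topologicalClosure_eq
  have hKset : (K : Set H) = closure (Set.range ⇑(sqrtOp R0)) := by
    rw [hKdef, Submodule.topologicalClosure_coe, LinearMap.coe_range, ContinuousLinearMap.coe_coe]
  have hbase : ∀ z, sqrtOp R0 z ∈ K := fun z =>
    Submodule.le_topologicalClosure _ (LinearMap.mem_range_self _ z)
  have hmem := wrRes_mem hR0 P hP hK hbase
  have hmemC : ∀ w : List (Fin m),
      sqrtOp (wrRes R0 P w) x ∈ closure (Set.range ⇑(sqrtOp R0)) := fun w => by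
    rw [← hKset]; exact (hmem w x).2
  have hswap : ∀ {T : H →L[ℂ] H}, IsSelfAdjoint T → ∀ u z : H,
      ⟪u, T z⟫_ℂ = ⟪T u, z⟫_ℂ := by
    intro T hT u z
    conv_lhs => rw [← hT.adjoint_eq]
    exact ContinuousLinearMap.adjoint_inner_right T u z
  have hnorm : ∀ w : List (Fin m), ‖sqrtOp (wrRes R0 P w) x‖ ^ 2 = g w := by
    intro w
    have h1 : ⟪sqrtOp (wrRes R0 P w) x, sqrtOp (wrRes R0 P w) x⟫_ℂ
        = ⟪x, wrRes R0 P w x⟫_ℂ := by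
      calc ⟪sqrtOp (wrRes R0 P w) x, sqrtOp (wrRes R0 P w) x⟫_ℂ
          = ⟪x, sqrtOp (wrRes R0 P w) (sqrtOp (wrRes R0 P w) x)⟫_ℂ :=
            (hswap (sqrtOp_isSelfAdjoint _) x _).symm
        _ = ⟪x, (sqrtOp (wrRes R0 P w) * sqrtOp (wrRes R0 P w)) x⟫_ℂ := rfl
        _ = ⟪x, wrRes R0 P w x⟫_ℂ := by rw [sqrtOp_mul_self (hpos w)]
    have h2 : (⟪sqrtOp (wrRes R0 P w) x, sqrtOp (wrRes R0 P w) x⟫_ℂ).re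
        = ‖sqrtOp (wrRes R0 P w) x‖ ^ 2 := by
      simpa using inner_self_eq_norm_sq (𝕜 := ℂ) (sqrtOp (wrRes R0 P w) x)
    show _ = (⟪x, wrRes R0 P w x⟫_ℂ).re
    rw [← h1, h2]
  have hm : 0 < m := by
    by_contra hm0
    have hm0' : m = 0 := Nat.le_zero.mp (not_lt.mp hm0)
    subst hm0'
    have h0 := hleak (sqrtOp (wrRes R0 P []) x) (hmemC [])
    rw [hnorm []] at h0
    have hsum0 : (∑ j : Fin 0, P j) = 0 := by simp
    rw [hsum0] at h0
    simp only [ContinuousLinearMap.zero_apply, inner_zero_right, Complex.zero_re] at h0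
    have : g [] = (⟪x, R0 x⟫_ℂ).re := rfl
    nlinarith [hg0 [], hx, h0, this]
  have hm' : (0:ℝ) < m := Nat.cast_pos.mpr hm
  have hc0 : 0 ≤ c := le_max_left _ _
  have hc1 : c < 1 := by
    have : 0 < α / m := div_pos hα hm'
    exact max_lt one_pos (by linarith)
  have ha0 : ∀ w j, 0 ≤ (⟪x, wrDiss (P j) (wrRes R0 P w) x⟫_ℂ).re := fun w j =>
    hre (wrDiss_isPositive (hP j).1 (hP j).2 (hpos w)) x
  have hp0 : ∀ w j, 0 ≤ p w j := by
    intro w j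
    rw [hpdef]
    by_cases h : 0 < ∑ k, (⟪x, wrDiss (P k) (wrRes R0 P w) x⟫_ℂ).re
    · simp only [pX, if_pos h]
      exact div_nonneg (ha0 w j) h.le
    · simp only [pX, if_neg h]
      exact hq0 j
  have hkey : ∀ w, ∑ j, p w j * g (j :: w) ≤ c * g w := by
    intro w
    have hb0 : ∀ j, 0 ≤ (⟪x, wrStep (P j) (wrRes R0 P w) x⟫_ℂ).re := fun j =>
      hre (wrStep_isPositive (hP j).1 (hP j).2 (hpos w)) x
    have hab : ∀ j, (⟪x, wrDiss (P j) (wrRes R0 P w) x⟫_ℂ).re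
        + (⟪x, wrStep (P j) (wrRes R0 P w) x⟫_ℂ).re = g w := by
      intro j
      have h := congrArg (fun T : H →L[ℂ] H => (⟪x, T x⟫_ℂ).re)
        (wrDiss_add_wrStep (P := P j) (hpos w))
      simpa [ContinuousLinearMap.add_apply, inner_add_right] using h
    have hSa : α * g w ≤ ∑ j, (⟪x, wrDiss (P j) (wrRes R0 P w) x⟫_ℂ).re := by
      have hEq : ∀ j, ⟪x, wrDiss (P j) (wrRes R0 P w) x⟫_ℂ
          = ⟪sqrtOp (wrRes R0 P w) x, P j (sqrtOp (wrRes R0 P w) x)⟫_ℂ := by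
        intro j
        calc ⟪x, wrDiss (P j) (wrRes R0 P w) x⟫_ℂ
            = ⟪x, sqrtOp (wrRes R0 P w) ((P j) (sqrtOp (wrRes R0 P w) x))⟫_ℂ := rfl
          _ = ⟪sqrtOp (wrRes R0 P w) x, P j (sqrtOp (wrRes R0 P w) x)⟫_ℂ :=
              hswap (sqrtOp_isSelfAdjoint _) _ _
      have hsum : ∑ j, (⟪x, wrDiss (P j) (wrRes R0 P w) x⟫_ℂ).re
          = (⟪sqrtOp (wrRes R0 P w) x, (∑ j, P j) (sqrtOp (wrRes R0 P w) x)⟫_ℂ).re := by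
        rw [ContinuousLinearMap.sum_apply, inner_sum, Complex.re_sum]
        exact Finset.sum_congr rfl fun j _ => by rw [hEq j]
      rw [hsum]
      have h := hleak (sqrtOp (wrRes R0 P w) x) (hmemC w)
      rwa [hnorm w] at h
    exact key_ineq hm hα (fun j => (⟪x, wrDiss (P j) (wrRes R0 P w) x⟫_ℂ).re)
      (fun j => (⟪x, wrStep (P j) (wrRes R0 P w) x⟫_ℂ).re) q hq0
      (fun j => ha0 w j) hb0 hab hSa (hg0 w)
  -- the integral machinery
  set fn : ℕ → (ℕ → Fin m) → ℝ≥0∞ :=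
    fun n ω => ENNReal.ofReal ((⟪x, wrResB R0 P ω n x⟫_ℂ).re) with hfn
  have hdecomp : ∀ n ω, fn n ω = ∑ v : Fin n → Fin m,
      (_root_.cylinder (List.ofFn v)).indicator
        (fun _ => ENNReal.ofReal (g ((List.ofFn v).reverse))) ω := by
    intro n ω
    rw [Finset.sum_eq_single_of_mem (fun i : Fin n => ω i) (Finset.mem_univ _)]
    · rw [Set.indicator_of_mem]
      · rw [hfn]
        dsimp only
        rw [wrResB_eq_wrRes]
      · rw [mem_cylinder_ofFn]; exact fun i => rfl
    · intro v _ hv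
      rw [Set.indicator_of_notMem]
      intro hmem'
      apply hv
      funext i
      exact ((mem_cylinder_ofFn v ω).mp hmem' i).symm
  have hmeasfn : ∀ n, Measurable (fn n) := by
    intro n
    have h : fn n = fun ω => ∑ v : Fin n → Fin m,
        (_root_.cylinder (List.ofFn v)).indicator
          (fun _ => ENNReal.ofReal (g ((List.ofFn v).reverse))) ω := funext (hdecomp n)
    rw [h]
    exact Finset.measurable_sum _ fun v _ =>
      measurable_const.indicator (measurableSet_cylinder _)
  have hlint : ∀ n, ∫⁻ ω, fn n ω ∂ν = ENNReal.ofReal (wrA p g n []) := by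
    intro n
    rw [lintegral_congr (hdecomp n),
      lintegral_finset_sum _ fun v _ =>
        measurable_const.indicator (measurableSet_cylinder _)]
    have hterm : ∀ v : Fin n → Fin m,
        ∫⁻ ω, (_root_.cylinder (List.ofFn v)).indicator
          (fun _ => ENNReal.ofReal (g ((List.ofFn v).reverse))) ω ∂ν
        = ENNReal.ofReal (wrCylWeight p [] (List.ofFn v) * g ((List.ofFn v).reverse)) := by
      intro v
      rw [lintegral_indicator_const (measurableSet_cylinder _), hν,
        ← ENNReal.ofReal_mul (hg0 _), mul_comm]
    rw [Finset.sum_congr rfl fun v _ => hterm v,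
      ← ENNReal.ofReal_sum_of_nonneg
        (fun v _ => mul_nonneg (wrCylWeight_nonneg hp0 _ _) (hg0 _))]
    congr 1
    rw [wrA_eq_sum]
    exact Finset.sum_congr rfl fun v _ => by rw [List.append_nil]
  have hboundn : ∀ n, ∫⁻ ω, fn n ω ∂ν ≤ ENNReal.ofReal (c ^ n * g []) := fun n => by
    rw [hlint n]
    exact ENNReal.ofReal_le_ofReal (wrA_le_pow hc0 hp0 hkey n)
  have htend0 : Tendsto (fun n => ∫⁻ ω, fn n ω ∂ν) atTop (𝓝 0) := by
    have hup : Tendsto (fun n => ENNReal.ofReal (c ^ n * g [])) atTop (𝓝 0) := by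
      have h1 : Tendsto (fun n => c ^ n * g []) atTop (𝓝 (0 * g [])) :=
        (tendsto_pow_atTop_nhds_zero_of_lt_one hc0 hc1).mul_const _
      rw [zero_mul] at h1
      simpa using ENNReal.tendsto_ofReal h1
    exact tendsto_of_tendsto_of_tendsto_of_le_of_le tendsto_const_nhds hup
      (fun n => zero_le) hboundn
  set F : (ℕ → Fin m) → ℝ≥0∞ := fun ω => ENNReal.ofReal ((⟪x, Rinf ω x⟫_ℂ).re) with hF
  have hptw : ∀ ω, Tendsto (fun n => fn n ω) atTop (𝓝 (F ω)) := by
    intro ω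
    have h1 : Tendsto (fun n => ⟪x, wrResB R0 P ω n x⟫_ℂ) atTop
        (𝓝 ⟪x, Rinf ω x⟫_ℂ) := tendsto_const_nhds.inner (hRinf ω x)
    have h2 := (Complex.continuous_re.tendsto _).comp h1
    exact (ENNReal.continuous_ofReal.tendsto _).comp h2
  have hFli : F = fun ω => liminf (fun n => fn n ω) atTop :=
    funext fun ω => ((hptw ω).liminf_eq).symm
  have hFmeas : Measurable F := by
    rw [hFli]; exact Measurable.liminf hmeasfn
  have hFint : ∫⁻ ω, F ω ∂ν = 0 := by
    refine le_antisymm ?_ zero_le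
    calc ∫⁻ ω, F ω ∂ν = ∫⁻ ω, liminf (fun n => fn n ω) atTop ∂ν := by rw [hFli]
      _ ≤ liminf (fun n => ∫⁻ ω, fn n ω ∂ν) atTop := lintegral_liminf_le hmeasfn
      _ = 0 := htend0.liminf_eq
  have hae := (lintegral_eq_zero_iff hFmeas).mp hFint
  filter_upwards [hae] with ω hω
  have h1 : (⟪x, Rinf ω x⟫_ℂ).re ≤ 0 := by
    have hω' : ENNReal.ofReal ((⟪x, Rinf ω x⟫_ℂ).re) = 0 := hω
    exact ENNReal.ofReal_eq_zero.mp hω'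
  have h2 : 0 ≤ (⟪x, Rinf ω x⟫_ℂ).re := by
    have hterm : ∀ n, 0 ≤ (⟪x, wrResB R0 P ω n x⟫_ℂ).re := fun n =>
      hre (wrResB_isPositive hR0 P hP ω n) x
    have h1' : Tendsto (fun n => (⟪x, wrResB R0 P ω n x⟫_ℂ).re) atTop
        (𝓝 ((⟪x, Rinf ω x⟫_ℂ).re)) :=
      (Complex.continuous_re.tendsto _).comp (tendsto_const_nhds.inner (hRinf ω x))
    exact ge_of_tendsto' h1' hterm
  linarith
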